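/- Let C be a class of distributions on a countable domain X and let V_sub be a subtractive adaptive adversary. Let ζ ∈ (0,1), m ∈ ℕ, p ∈ C, and let Q be a meta-distribution over C such that d_TV(V_sub(|Q|^m), V_sub(p^m)) < ζ. Then for every k ∈ ℕ there exists an adaptive additive adversary V_{add,k} such that d_TV(V_{add,k}(|Q|^m), V_{add,k}(p^m)) < ζ + 1/(k+1). Furthermore, if V_sub has fixed constant budget η < 2/k, then V_{add,k} has fixed constant budget of no more than kη. -/

import Mathlib

open scoped ENNReal NNReal

/-- Total variation distance between two discrete distributions. -/
noncomputable def tv {X : Type*} (p q : PMF X) : ℝ :=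
  (∑' x, |(p x).toReal - (q x).toReal|) / 2

/-- The distribution of an i.i.d. sample of size `m` from `p`, viewed as a multiset. -/
noncomputable def iid {X : Type*} (p : PMF X) : ℕ → PMF (Multiset X)
  | 0 => PMF.pure 0
  | n + 1 => (iid p n).bind fun s => p.map fun x => x ::ₘ s

/-- `|Q|^m` : first draw `q ∼ Q`, then an i.i.d. sample `S ∼ q^m`. -/
noncomputable def metaSample {X : Type*} (Q : PMF (PMF X)) (m : ℕ) : PMF (Multiset X) :=
  Q.bind fun q => iid q m

/-- An adaptive adversary: a randomized map from samples (finite multisets) to samples. -/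
abbrev Adversary (X : Type*) := Multiset X → PMF (Multiset X)

/-- `V(P)`: the distribution of `V S` for `S ∼ P` (including internal randomness). -/
noncomputable def advPush {X : Type*} (V : Adversary X) (P : PMF (Multiset X)) :
    PMF (Multiset X) := P.bind V

/-- An additive adversary only adds points: `S ⊆ V(S)` almost surely. -/
def IsAdditive {X : Type*} (V : Adversary X) : Prop :=
  ∀ S T, T ∈ (V S).support → S ≤ T

/-- A subtractive adversary only removes points: `V(S) ⊆ S` almost surely. -/
def IsSubtractive {X : Type*} (V : Adversary X) : Prop :=
  ∀ S T, T ∈ (V S).support → T ≤ S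

/-- Fixed constant budget `η`: `|V(S)|` depends only on `|S|` (via `c`), and for every `m`,
`η m − 1 < m·budget(V,m) ≤ η m` where `m·budget(V,m) = ||V(S)| − |S||`. -/
def FixedBudget {X : Type*} (V : Adversary X) (η : ℝ) : Prop :=
  ∃ c : ℕ → ℕ, (∀ S T, T ∈ (V S).support → Multiset.card T = c (Multiset.card S)) ∧
    ∀ m : ℕ, η * m - 1 < |(c m : ℝ) - m| ∧ |(c m : ℝ) - m| ≤ η * m

/-- Fixed constant budget `η` for an additive adversary (`m·budget(V,m) = |V(S)| − |S|`). -/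
def FixedBudgetAdd {X : Type*} (V : Adversary X) (η : ℝ) : Prop :=
  ∃ c : ℕ → ℕ, (∀ S T, T ∈ (V S).support → Multiset.card T = c (Multiset.card S)) ∧
    ∀ m : ℕ, η * m - 1 < (c m : ℝ) - m ∧ (c m : ℝ) - m ≤ η * m

/-- Fixed constant budget `η` for a subtractive adversary (`m·budget(V,m) = |S| − |V(S)|`). -/
def FixedBudgetSub {X : Type*} (V : Adversary X) (η : ℝ) : Prop :=
  ∃ c : ℕ → ℕ, (∀ S T, T ∈ (V S).support → Multiset.card T = c (Multiset.card S)) ∧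
    ∀ m : ℕ, η * m - 1 < (m : ℝ) - c m ∧ (m : ℝ) - c m ≤ η * m

/-- Probability of an event under a discrete distribution. -/
noncomputable def probEvent {β : Type*} (P : PMF β) (E : Set β) : ℝ≥0∞ :=
  P.toOuterMeasure E

/-- `A` with sample complexity `mc` learns the class `C` against adversary `V`,
up to error `bound + ε` with confidence `1 − δ` once `m ≥ mc ε δ`. -/
def RobustLearnerFor {X : Type*} (C : Set (PMF X)) (A : Multiset X → PMF X)
    (mc : ℝ → ℝ → ℕ) (V : Adversary X) (bound : ℝ) : Prop :=
  ∀ p ∈ C, ∀ ε δ : ℝ, 0 < ε → ε < 1 → 0 < δ → δ < 1 →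
    ∀ m : ℕ, mc ε δ ≤ m →
      1 - ENNReal.ofReal δ ≤
        probEvent ((iid p m).bind V) {T | tv (A T) p ≤ bound + ε}

/-- `C` is adaptively α-robustly learnable w.r.t. the single adversary `V` with budget `η`. -/
def RobustlyLearnableWrt {X : Type*} (C : Set (PMF X)) (α : ℝ)
    (V : Adversary X) (η : ℝ) : Prop :=
  ∃ A mc, RobustLearnerFor C A mc V (α * η)

/-- `V` (with budget `η`) is a universal α-adversary for `C`. -/
def UniversalAdversary {X : Type*} (C : Set (PMF X)) (α : ℝ)
    (V : Adversary X) (η : ℝ) : Prop :=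
  ¬ RobustlyLearnableWrt C α V η

/-- `C` is adaptively α-robustly learnable w.r.t. a class `𝒱` of adversaries
(each given with its budget). -/
def RobustlyLearnableWrtClass {X : Type*} (C : Set (PMF X)) (α : ℝ)
    (𝒱 : Set (Adversary X × ℝ)) : Prop :=
  ∃ A mc, ∀ Vη ∈ 𝒱, RobustLearnerFor C A mc Vη.1 (α * Vη.2)

/-- `C` is adaptively additively α-robustly learnable: one learner works simultaneously
against all additive adaptive adversaries with fixed constant budgets. -/
def AdditivelyRobustlyLearnable {X : Type*} (C : Set (PMF X)) (α : ℝ) : Prop :=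
  ∃ A mc, ∀ V : Adversary X, ∀ η : ℝ, 0 < η → η < 1 →
    IsAdditive V → FixedBudgetAdd V η → RobustLearnerFor C A mc V (α * η)

/-- `C` is adaptively subtractively α-robustly learnable. -/
def SubtractivelyRobustlyLearnable {X : Type*} (C : Set (PMF X)) (α : ℝ) : Prop :=
  ∃ A mc, ∀ V : Adversary X, ∀ η : ℝ, 0 < η → η < 1 →
    IsSubtractive V → FixedBudgetSub V η → RobustLearnerFor C A mc V (α * η)

/-- The pair `(V1, V2)` successfully `(γ,ζ)`-confuses `C`-generated samples of size `m`. -/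
def ConfusesPair {X : Type*} (C : Set (PMF X)) (V1 V2 : Adversary X)
    (γ ζ : ℝ) (m : ℕ) : Prop :=
  ∃ p ∈ C, ∃ Q : PMF (PMF X), Q.support ⊆ C ∧
    (∀ q ∈ Q.support, γ < tv p q) ∧
    tv (advPush V1 (metaSample Q m)) (advPush V2 (iid p m)) < ζ

/-- A single adversary `V` successfully `(γ,ζ)`-confuses `C`-generated samples of size `m`. -/
def Confuses {X : Type*} (C : Set (PMF X)) (V : Adversary X) (γ ζ : ℝ) (m : ℕ) : Prop :=
  ConfusesPair C V V γ ζ m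

/-- `p` is the distribution `p_{i,j,k} = (1 − 1/j)·δ_{(0,0)} + (1/j − 1/k)·U_{B_i×{2j+1}}
 + (1/k)·δ_{(i,2j+2)}` on `ℕ × ℕ`. -/
def IsPijk (B : ℕ → Finset ℕ) (i j k : ℕ) (p : PMF (ℕ × ℕ)) : Prop :=
  ∀ x : ℕ × ℕ,
    p x = (1 - ((j : ℝ≥0∞))⁻¹) * (if x = (0, 0) then 1 else 0)
      + (((j : ℝ≥0∞))⁻¹ - ((k : ℝ≥0∞))⁻¹) *
          (if x.1 ∈ B i ∧ x.2 = 2 * j + 1 then (((B i).card : ℝ≥0∞))⁻¹ else 0)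
      + ((k : ℝ≥0∞))⁻¹ * (if x = (i, 2 * j + 2) then 1 else 0)

/-- The class `C_g = {p_{i,j,g(j)} : i, j ∈ ℕ}` (for the meaningful parameters). -/
def Cg (B : ℕ → Finset ℕ) (g : ℕ → ℕ) : Set (PMF (ℕ × ℕ)) :=
  {p | ∃ i j : ℕ, 1 ≤ j ∧ j < g j ∧ (B i).Nonempty ∧ IsPijk B i j (g j) p}

/-- `g` is superlinear: `g(n)/n → ∞`. -/
def Superlinear (g : ℕ → ℕ) : Prop :=
  Filter.Tendsto (fun n => (g n : ℝ) / n) Filter.atTop Filter.atTop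

open scoped Classical

namespace Stmt10Aux

/-! ### Total variation via `ℝ≥0∞` -/

noncomputable def Dv {α : Type*} (p q : PMF α) : ℝ≥0∞ :=
  ∑' x, ((p x - q x) + (q x - p x))

lemma Dv_le_two {α : Type*} (p q : PMF α) : Dv p q ≤ 2 := by
  have h : ∀ x, ((p x - q x) + (q x - p x)) ≤ p x + q x := fun x =>
    add_le_add tsub_le_self tsub_le_self
  calc Dv p q ≤ ∑' x, (p x + q x) := ENNReal.tsum_le_tsum h
    _ = 1 + 1 := by rw [ENNReal.tsum_add, p.tsum_coe, q.tsum_coe]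
    _ = 2 := one_add_one_eq_two

lemma Dv_ne_top {α : Type*} (p q : PMF α) : Dv p q ≠ ⊤ :=
  ne_top_of_le_ne_top (by norm_num) (Dv_le_two p q)

lemma tv_eq_Dv {α : Type*} (p q : PMF α) : tv p q = (Dv p q).toReal / 2 := by
  rw [tv, Dv, ENNReal.tsum_toReal_eq]
  · congr 1
    refine (tsum_congr fun x => ?_).symm
    have hp : p x ≠ ⊤ := ne_top_of_le_ne_top ENNReal.one_ne_top (p.coe_le_one x)
    have hq : q x ≠ ⊤ := ne_top_of_le_ne_top ENNReal.one_ne_top (q.coe_le_one x)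
    rcases le_total (p x) (q x) with h | h
    · have h' : (p x).toReal ≤ (q x).toReal := (ENNReal.toReal_le_toReal hp hq).2 h
      rw [tsub_eq_zero_of_le h, zero_add, ENNReal.toReal_sub_of_le h hq,
        abs_sub_comm, abs_of_nonneg (by linarith)]
    · have h' : (q x).toReal ≤ (p x).toReal := (ENNReal.toReal_le_toReal hq hp).2 h
      rw [tsub_eq_zero_of_le h, add_zero, ENNReal.toReal_sub_of_le h hp,
        abs_of_nonneg (by linarith)]
  · intro x
    have h2 : ((p x - q x) + (q x - p x)) ≤ (2 : ℝ≥0∞) :=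
      le_trans (add_le_add tsub_le_self tsub_le_self)
        (le_trans (add_le_add (p.coe_le_one x) (q.coe_le_one x)) (by norm_num))
    exact ne_top_of_le_ne_top (by norm_num) h2

lemma Dv_bind_le {α β : Type*} (p q : PMF α) (f : α → PMF β) :
    Dv (p.bind f) (q.bind f) ≤ Dv p q := by
  have key : ∀ y, ((p.bind f) y - (q.bind f) y) + ((q.bind f) y - (p.bind f) y)
      ≤ ∑' x, ((p x - q x) + (q x - p x)) * f x y := by
    intro y
    rw [PMF.bind_apply, PMF.bind_apply]
    have h1 : (∑' x, p x * f x y) - (∑' x, q x * f x y) ≤ ∑' x, (p x - q x) * f x y := by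
      rw [tsub_le_iff_right, ← ENNReal.tsum_add]
      refine ENNReal.tsum_le_tsum fun x => ?_
      rw [← add_mul]
      exact mul_le_mul_left le_tsub_add _
    have h2 : (∑' x, q x * f x y) - (∑' x, p x * f x y) ≤ ∑' x, (q x - p x) * f x y := by
      rw [tsub_le_iff_right, ← ENNReal.tsum_add]
      refine ENNReal.tsum_le_tsum fun x => ?_
      rw [← add_mul]
      exact mul_le_mul_left le_tsub_add _
    calc _ ≤ (∑' x, (p x - q x) * f x y) + (∑' x, (q x - p x) * f x y) := add_le_add h1 h2
      _ = ∑' x, ((p x - q x) + (q x - p x)) * f x y := by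
          rw [← ENNReal.tsum_add]; exact tsum_congr fun x => (add_mul _ _ _).symm
  calc Dv (p.bind f) (q.bind f) ≤ ∑' y, ∑' x, ((p x - q x) + (q x - p x)) * f x y :=
        ENNReal.tsum_le_tsum key
    _ = ∑' x, ∑' y, ((p x - q x) + (q x - p x)) * f x y := ENNReal.tsum_comm
    _ = ∑' x, ((p x - q x) + (q x - p x)) * 1 := by
        refine tsum_congr fun x => ?_
        rw [ENNReal.tsum_mul_left, (f x).tsum_coe]
    _ = Dv p q := by simp [Dv]

/-! ### Uniform mixtures -/

lemma uniform_bind_apply {n : ℕ} {α : Type*} (f : Fin (n+1) → PMF α) (y : α) :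
    ((PMF.uniformOfFintype (Fin (n+1))).bind f) y
      = ∑ j : Fin (n+1), ((n+1 : ℕ) : ℝ≥0∞)⁻¹ * f j y := by
  rw [PMF.bind_apply, tsum_fintype]
  simp [PMF.uniformOfFintype_apply]

lemma uniform_bind_reindex {n : ℕ} {α : Type*} (f : Fin (n+1) → PMF α)
    (e : Fin (n+1) ≃ Fin (n+1)) :
    (PMF.uniformOfFintype (Fin (n+1))).bind (fun j => f (e j))
      = (PMF.uniformOfFintype (Fin (n+1))).bind f := by
  ext y
  rw [PMF.bind_apply, PMF.bind_apply]
  simp only [PMF.uniformOfFintype_apply]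
  exact Equiv.tsum_eq e (fun j => (Fintype.card (Fin (n+1)) : ℝ≥0∞)⁻¹ * f j y)

lemma Dv_uniform_bind_le {n : ℕ} {α : Type*} (f g : Fin (n+1) → PMF α) :
    Dv ((PMF.uniformOfFintype (Fin (n+1))).bind f)
       ((PMF.uniformOfFintype (Fin (n+1))).bind g)
      ≤ ((n+1 : ℕ) : ℝ≥0∞)⁻¹ * ∑ j : Fin (n+1), Dv (f j) (g j) := by
  set c : ℝ≥0∞ := ((n+1 : ℕ) : ℝ≥0∞)⁻¹ with hc
  have key : ∀ y, (((PMF.uniformOfFintype (Fin (n+1))).bind f) y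
        - ((PMF.uniformOfFintype (Fin (n+1))).bind g) y)
      + (((PMF.uniformOfFintype (Fin (n+1))).bind g) y
        - ((PMF.uniformOfFintype (Fin (n+1))).bind f) y)
      ≤ ∑ j : Fin (n+1), c * ((f j y - g j y) + (g j y - f j y)) := by
    intro y
    rw [uniform_bind_apply, uniform_bind_apply]
    have h1 : (∑ j : Fin (n+1), c * f j y) - (∑ j : Fin (n+1), c * g j y)
        ≤ ∑ j : Fin (n+1), c * (f j y - g j y) := by
      rw [tsub_le_iff_right, ← Finset.sum_add_distrib]
      refine Finset.sum_le_sum fun j _ => ?_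
      rw [← mul_add]
      exact mul_le_mul_right le_tsub_add c
    have h2 : (∑ j : Fin (n+1), c * g j y) - (∑ j : Fin (n+1), c * f j y)
        ≤ ∑ j : Fin (n+1), c * (g j y - f j y) := by
      rw [tsub_le_iff_right, ← Finset.sum_add_distrib]
      refine Finset.sum_le_sum fun j _ => ?_
      rw [← mul_add]
      exact mul_le_mul_right le_tsub_add c
    calc _ ≤ (∑ j : Fin (n+1), c * (f j y - g j y)) + ∑ j : Fin (n+1), c * (g j y - f j y) :=
          add_le_add h1 h2
      _ = _ := by
          rw [← Finset.sum_add_distrib]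
          exact Finset.sum_congr rfl fun j _ => (mul_add _ _ _).symm
  calc Dv _ _ ≤ ∑' y, ∑ j : Fin (n+1), c * ((f j y - g j y) + (g j y - f j y)) :=
        ENNReal.tsum_le_tsum key
    _ = ∑ j : Fin (n+1), ∑' y, c * ((f j y - g j y) + (g j y - f j y)) :=
        Summable.tsum_finsetSum (fun i _ => ENNReal.summable)
    _ = ∑ j : Fin (n+1), c * Dv (f j) (g j) :=
        Finset.sum_congr rfl fun j _ => ENNReal.tsum_mul_left
    _ = c * ∑ j : Fin (n+1), Dv (f j) (g j) := by rw [Finset.mul_sum]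

/-! ### Disintegration -/

lemma bind_congr' {α β : Type*} (p : PMF α) (f g : α → PMF β)
    (h : ∀ a ∈ p.support, f a = g a) : p.bind f = p.bind g := by
  ext y
  rw [PMF.bind_apply, PMF.bind_apply]
  refine tsum_congr fun a => ?_
  by_cases ha : p a = 0
  · simp [ha]
  · rw [h a (by simpa [PMF.mem_support_iff] using ha)]

lemma tsum_prod_eta {A B : Type*} (f : A → B → ℝ≥0∞) :
    ∑' (z : A × B), f z.1 z.2 = ∑' (a : A) (b : B), f a b := ENNReal.tsum_prod

lemma marg_apply {A B : Type*} (J : PMF (A × B)) (t : A) :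
    (J.map Prod.fst) t = ∑' r, J (t, r) := by
  rw [PMF.map_apply]
  have h1 : ∑' (a : A × B), (if t = a.1 then J a else 0)
      = ∑' (a : A) (b : B), (if t = a then J (a, b) else 0) := by
    rw [← tsum_prod_eta (fun a b => if t = a then J (a, b) else 0)]
  rw [h1]
  rw [show (fun a => ∑' (b : B), (if t = a then J (a, b) else 0))
      = (fun a => if t = a then ∑' (b : B), J (a, b) else 0) from
    funext fun a => by by_cases h : t = a <;> simp [h]]
  exact (tsum_eq_single t (by intro a ha; simp [Ne.symm ha])).trans (by simp)

noncomputable def condP {A B : Type*} (J : PMF (A × B)) (t : A)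
    (h : (J.map Prod.fst) t ≠ 0) : PMF B := by
  refine ⟨fun r => J (t, r) / (J.map Prod.fst) t, ?_⟩
  have htop : (J.map Prod.fst) t ≠ ⊤ :=
    ne_top_of_le_ne_top ENNReal.one_ne_top ((J.map Prod.fst).coe_le_one t)
  have h2 : ∑' r, J (t, r) / (J.map Prod.fst) t = 1 := by
    simp only [div_eq_mul_inv]
    rw [ENNReal.tsum_mul_right, ← marg_apply, ENNReal.mul_inv_cancel h htop]
  exact h2 ▸ ENNReal.summable.hasSum

lemma condP_apply {A B : Type*} (J : PMF (A × B)) (t : A)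
    (h : (J.map Prod.fst) t ≠ 0) (r : B) :
    condP J t h r = J (t, r) / (J.map Prod.fst) t := rfl

lemma condP_support {A B : Type*} (J : PMF (A × B)) (t : A)
    (h : (J.map Prod.fst) t ≠ 0) {r : B} (hr : r ∈ (condP J t h).support) :
    (t, r) ∈ J.support := by
  rw [PMF.mem_support_iff] at hr ⊢
  intro h0
  apply hr
  rw [condP_apply, h0, ENNReal.zero_div]

lemma disint {A B C : Type*} (J : PMF (A × B)) (d : A → PMF B) (G : A → B → PMF C) :
    J.bind (fun z => G z.1 z.2)
      = (J.map Prod.fst).bind (fun t =>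
          (if h : (J.map Prod.fst) t ≠ 0 then condP J t h else d t).bind (fun r => G t r)) := by
  ext y
  rw [PMF.bind_apply, PMF.bind_apply]
  have h1 : ∑' (a : A × B), J a * (G a.1 a.2) y
      = ∑' (a : A) (b : B), J (a, b) * (G a b) y := by
    rw [← tsum_prod_eta (fun a b => J (a, b) * (G a b) y)]
  rw [h1]
  refine tsum_congr fun t => ?_
  by_cases h : (J.map Prod.fst) t ≠ 0
  · rw [dif_pos h, PMF.bind_apply, ← ENNReal.tsum_mul_left]
    refine tsum_congr fun r => ?_
    have htop : (J.map Prod.fst) t ≠ ⊤ :=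
      ne_top_of_le_ne_top ENNReal.one_ne_top ((J.map Prod.fst).coe_le_one t)
    rw [condP_apply, ← mul_assoc, ENNReal.mul_div_cancel h htop]
  · push_neg at h
    have hz : ∀ r, J (t, r) = 0 := by
      intro r
      have hm := marg_apply J t
      rw [h] at hm
      exact le_antisymm (hm ▸ ENNReal.le_tsum r) zero_le
    simp [h, hz]

/-! ### i.i.d. batch sums -/

noncomputable def powS {X : Type*} (ν : PMF (Multiset X)) : ℕ → PMF (Multiset X)
  | 0 => PMF.pure 0
  | n + 1 => (powS ν n).bind fun w => ν.bind fun r => PMF.pure (w + r)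

lemma powS_support_card {X : Type*} (ν : PMF (Multiset X)) (D : ℕ)
    (h : ∀ r ∈ ν.support, Multiset.card r = D) :
    ∀ n, ∀ w ∈ (powS ν n).support, Multiset.card w = n * D := by
  intro n
  induction n with
  | zero => intro w hw; simp [powS] at hw; simp [hw]
  | succ n ih =>
      intro w hw
      simp only [powS, PMF.support_bind, PMF.support_pure, Set.mem_iUnion] at hw
      obtain ⟨w', hw', r, hr, hw⟩ := hw
      simp at hw
      subst hw
      rw [Multiset.card_add, ih w' hw', h r hr, Nat.succ_mul]

lemma iid_support_card {X : Type*} (p : PMF X) (m : ℕ) :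
    ∀ S ∈ (iid p m).support, Multiset.card S = m := by
  induction m with
  | zero => intro S hS; simp [iid] at hS; simp [hS]
  | succ n ih =>
      intro S hS
      simp only [iid, PMF.support_bind, PMF.support_map, Set.mem_iUnion] at hS
      obtain ⟨s, hs, x, hx, hS⟩ := hS
      subst hS
      rw [Multiset.card_cons, ih s hs]

variable {X : Type*}

noncomputable def batch (xi1 xi2 : Multiset X → PMF (Multiset X)) (c1 c2 : ℕ)
    (t : Multiset X) : PMF (Multiset X) :=
  (powS (xi1 t) c1).bind fun w₁ => (powS (xi2 t) c2).bind fun w₂ => PMF.pure (w₁ + w₂)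

noncomputable def Kc (xi1 xi2 : Multiset X → PMF (Multiset X)) (c1 c2 : ℕ)
    (t : Multiset X) : PMF (Multiset X) :=
  (powS (xi1 t) c1).bind fun w₁ => (powS (xi2 t) c2).bind fun w₂ => PMF.pure (t + (w₁ + w₂))

lemma innerEq1 (xi1 xi2 : Multiset X → PMF (Multiset X)) (a b : ℕ) (t : Multiset X) :
    ((xi1 t).bind fun r => (batch xi1 xi2 a b t).bind fun w => PMF.pure ((t + r) + w))
      = Kc xi1 xi2 (a+1) b t := by
  rw [Kc, show powS (xi1 t) (a+1)
      = (powS (xi1 t) a).bind fun w => (xi1 t).bind fun r => PMF.pure (w + r) from rfl]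
  simp only [batch, PMF.bind_bind, PMF.pure_bind]
  rw [PMF.bind_comm (powS (xi1 t) a) (xi1 t)]
  refine congrArg _ (funext fun r => congrArg _ (funext fun w₁ =>
    congrArg _ (funext fun w₂ => congrArg _ ?_)))
  abel

lemma innerEq2 (xi1 xi2 : Multiset X → PMF (Multiset X)) (a b : ℕ) (t : Multiset X) :
    ((xi2 t).bind fun r => (batch xi1 xi2 a b t).bind fun w => PMF.pure ((t + r) + w))
      = Kc xi1 xi2 a (b+1) t := by
  rw [Kc, show powS (xi2 t) (b+1)
      = (powS (xi2 t) b).bind fun w => (xi2 t).bind fun r => PMF.pure (w + r) from rfl]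
  simp only [batch, PMF.bind_bind, PMF.pure_bind]
  rw [PMF.bind_comm (xi2 t) (powS (xi1 t) a)]
  refine congrArg _ (funext fun w₁ => ?_)
  rw [PMF.bind_comm (xi2 t) (powS (xi2 t) b)]
  refine congrArg _ (funext fun w₂ => congrArg _ (funext fun r => congrArg _ ?_))
  abel

/-! ### The additive adversary -/

noncomputable def JJ (Vs : Multiset X → PMF (Multiset X)) (P : PMF (Multiset X)) :
    PMF (Multiset X × Multiset X) :=
  P.bind fun S => (Vs S).map fun t => (t, S - t)

lemma JJ_marg_eq (Vs : Multiset X → PMF (Multiset X)) (P : PMF (Multiset X)) :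
    (JJ Vs P).map Prod.fst = P.bind Vs := by
  rw [JJ, PMF.map_bind]
  refine congrArg _ (funext fun S => ?_)
  rw [PMF.map_comp]
  exact PMF.map_id (Vs S)

lemma JJ_support {Vs : Multiset X → PMF (Multiset X)} {P : PMF (Multiset X)}
    {t r : Multiset X} (h : (t, r) ∈ (JJ Vs P).support) :
    ∃ S ∈ P.support, t ∈ (Vs S).support ∧ r = S - t := by
  simp only [JJ, PMF.support_bind, PMF.support_map, Set.mem_iUnion] at h
  obtain ⟨S, hS, h⟩ := h
  obtain ⟨t', ht', heq⟩ := h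
  have h1 : t' = t := congrArg Prod.fst heq
  subst h1
  have h2 : r = S - t' := (congrArg Prod.snd heq).symm
  exact ⟨S, hS, ht', h2⟩

noncomputable def XI (Vs : Multiset X → PMF (Multiset X)) (P : PMF (Multiset X))
    (dflt : PMF (Multiset X)) (t : Multiset X) : PMF (Multiset X) :=
  if h : (JJ Vs P).map Prod.fst t ≠ 0 then condP (JJ Vs P) t h else dflt

noncomputable def core (Vs : Multiset X → PMF (Multiset X))
    (bt : ℕ → Multiset X → PMF (Multiset X)) (k : ℕ) (S : Multiset X) : PMF (Multiset X) :=
  (Vs S).bind fun t => (PMF.uniformOfFintype (Fin (k+1))).bind fun j =>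
    (bt j.val t).bind fun w => PMF.pure (S + w)

noncomputable def vadd (Vs : Multiset X → PMF (Multiset X))
    (bt : ℕ → Multiset X → PMF (Multiset X)) (k m : ℕ) (a : ℕ → ℕ) (x₀ : X)
    (S : Multiset X) : PMF (Multiset X) :=
  if Multiset.card S = m then core Vs bt k S
  else PMF.pure (S + Multiset.replicate (a (Multiset.card S)) x₀)

lemma vadd_le (Vs : Multiset X → PMF (Multiset X)) (bt : ℕ → Multiset X → PMF (Multiset X))
    (k m : ℕ) (a : ℕ → ℕ) (x₀ : X) (S T : Multiset X)
    (hT : T ∈ (vadd Vs bt k m a x₀ S).support) : S ≤ T := by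
  rw [vadd] at hT
  split_ifs at hT with h
  · simp only [core, PMF.support_bind, PMF.support_pure, Set.mem_iUnion] at hT
    obtain ⟨t, _, j, _, w, _, hT⟩ := hT
    simp only [Set.mem_singleton_iff] at hT
    subst hT
    exact Multiset.le_add_right S w
  · simp only [PMF.support_pure, Set.mem_singleton_iff] at hT
    subst hT
    exact Multiset.le_add_right S _

lemma push_eq (Vs : Multiset X → PMF (Multiset X))
    (hVs : ∀ S T, T ∈ (Vs S).support → T ≤ S) (P : PMF (Multiset X)) (k m : ℕ)
    (hcard : ∀ S ∈ P.support, Multiset.card S = m)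
    (bt : ℕ → Multiset X → PMF (Multiset X)) (dflt : PMF (Multiset X))
    (a : ℕ → ℕ) (x₀ : X) :
    P.bind (vadd Vs bt k m a x₀)
      = (PMF.uniformOfFintype (Fin (k+1))).bind fun j =>
          ((JJ Vs P).map Prod.fst).bind fun t => (XI Vs P dflt t).bind fun r =>
            (bt j.val t).bind fun w => PMF.pure ((t + r) + w) := by
  set u := PMF.uniformOfFintype (Fin (k+1)) with hu
  set H : Multiset X → Multiset X → PMF (Multiset X) :=
    fun t r => u.bind fun j => (bt j.val t).bind fun w => PMF.pure ((t + r) + w) with hH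
  have h1 : P.bind (vadd Vs bt k m a x₀) = P.bind (core Vs bt k) :=
    bind_congr' _ _ _ fun S hS => if_pos (hcard S hS)
  have h2 : ∀ S, core Vs bt k S
      = ((Vs S).map fun t => (t, S - t)).bind fun z => H z.1 z.2 := by
    intro S
    rw [PMF.bind_map]
    refine bind_congr' _ _ _ fun t ht => ?_
    show (u.bind fun j => (bt j.val t).bind fun w => PMF.pure (S + w)) = H t (S - t)
    rw [hH]
    simp only [add_tsub_cancel_of_le (hVs S t ht)]
  have h3 : P.bind (core Vs bt k) = (JJ Vs P).bind fun z => H z.1 z.2 := by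
    rw [JJ, PMF.bind_bind]
    exact bind_congr' _ _ _ fun S _ => h2 S
  rw [h1, h3, disint (JJ Vs P) (fun _ => dflt) H]
  have h4 : ∀ t, ((XI Vs P dflt t).bind fun r => H t r)
      = u.bind fun j => (XI Vs P dflt t).bind fun r =>
          (bt j.val t).bind fun w => PMF.pure ((t + r) + w) := by
    intro t
    rw [hH]
    exact PMF.bind_comm _ _ _
  calc ((JJ Vs P).map Prod.fst).bind (fun t =>
        (if h : (JJ Vs P).map Prod.fst t ≠ 0 then condP (JJ Vs P) t h else dflt).bind
          fun r => H t r)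
      = ((JJ Vs P).map Prod.fst).bind (fun t => u.bind fun j =>
          (XI Vs P dflt t).bind fun r => (bt j.val t).bind fun w => PMF.pure ((t + r) + w)) := by
        refine congrArg _ (funext fun t => ?_)
        rw [← h4 t]; rfl
    _ = u.bind fun j => ((JJ Vs P).map Prod.fst).bind fun t =>
          (XI Vs P dflt t).bind fun r => (bt j.val t).bind fun w => PMF.pure ((t + r) + w) :=
        PMF.bind_comm _ _ _

/-! ### support cardinalities -/

lemma cond_card (Vs : Multiset X → PMF (Multiset X))
    (hVs : ∀ S T, T ∈ (Vs S).support → T ≤ S) (P : PMF (Multiset X)) (m : ℕ)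
    (hcard : ∀ S ∈ P.support, Multiset.card S = m)
    (c : ℕ → ℕ) (hc : ∀ S T, T ∈ (Vs S).support → Multiset.card T = c (Multiset.card S))
    (t : Multiset X) (h : (JJ Vs P).map Prod.fst t ≠ 0) :
    ∀ r ∈ (condP (JJ Vs P) t h).support, Multiset.card r = m - c m := by
  intro r hr
  obtain ⟨S, hS, ht, hrr⟩ := JJ_support (condP_support _ _ _ hr)
  subst hrr
  rw [Multiset.card_sub (hVs S t ht), hcard S hS, hc S t ht, hcard S hS]

lemma XI_card (Vs : Multiset X → PMF (Multiset X))
    (hVs : ∀ S T, T ∈ (Vs S).support → T ≤ S) (P P' : PMF (Multiset X)) (m : ℕ)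
    (hcard : ∀ S ∈ P.support, Multiset.card S = m)
    (hcard' : ∀ S ∈ P'.support, Multiset.card S = m)
    (t₀ : Multiset X) (h₀ : (JJ Vs P').map Prod.fst t₀ ≠ 0)
    (c : ℕ → ℕ) (hc : ∀ S T, T ∈ (Vs S).support → Multiset.card T = c (Multiset.card S)) :
    ∀ t, ∀ r ∈ (XI Vs P (condP (JJ Vs P') t₀ h₀) t).support, Multiset.card r = m - c m := by
  intro t r hr
  rw [XI] at hr
  split_ifs at hr with h
  · exact cond_card Vs hVs P m hcard c hc t h r hr
  · exact cond_card Vs hVs P' m hcard' c hc t₀ h₀ r hr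

lemma batch_card (xi1 xi2 : Multiset X → PMF (Multiset X)) (D : ℕ)
    (h1 : ∀ t, ∀ r ∈ (xi1 t).support, Multiset.card r = D)
    (h2 : ∀ t, ∀ r ∈ (xi2 t).support, Multiset.card r = D)
    (c1 c2 : ℕ) (t : Multiset X) :
    ∀ w ∈ (batch xi1 xi2 c1 c2 t).support, Multiset.card w = (c1 + c2) * D := by
  intro w hw
  simp only [batch, PMF.support_bind, PMF.support_pure, Set.mem_iUnion] at hw
  obtain ⟨w₁, hw₁, w₂, hw₂, hw⟩ := hw
  simp only [Set.mem_singleton_iff] at hw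
  subst hw
  rw [Multiset.card_add, powS_support_card _ D (h1 t) c1 w₁ hw₁,
    powS_support_card _ D (h2 t) c2 w₂ hw₂, add_mul]

lemma vadd_card (Vs : Multiset X → PMF (Multiset X))
    (bt : ℕ → Multiset X → PMF (Multiset X)) (k m : ℕ) (a : ℕ → ℕ) (x₀ : X) (kD : ℕ)
    (hbt : ∀ j, j ≤ k → ∀ t, ∀ w ∈ (bt j t).support, Multiset.card w = kD)
    (ham : a m = kD) :
    ∀ S T, T ∈ (vadd Vs bt k m a x₀ S).support →
      Multiset.card T = Multiset.card S + a (Multiset.card S) := by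
  intro S T hT
  rw [vadd] at hT
  split_ifs at hT with h
  · simp only [core, PMF.support_bind, PMF.support_pure, Set.mem_iUnion] at hT
    obtain ⟨t, _, j, _, w, hw, hT⟩ := hT
    simp only [Set.mem_singleton_iff] at hT
    subst hT
    rw [Multiset.card_add, hbt j.val (Fin.is_le j) t w hw, h, ham]
  · simp only [PMF.support_pure, Set.mem_singleton_iff] at hT
    subst hT
    rw [Multiset.card_add, Multiset.card_replicate]

end Stmt10Aux

/-- If a subtractive adversary `V_sub` makes `|Q|^m` and `p^m`
ζ-indistinguishable, then for every `k ∈ ℕ` there is a single additive adversary `V_{add,k}`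
with `d_TV(V_{add,k}(|Q|^m), V_{add,k}(p^m)) < ζ + 1/(k+1)`; moreover if `V_sub` has fixed
constant budget `η < 2/k`, then `V_{add,k}` has fixed constant budget at most `kη`. -/
theorem stmt10 {X : Type*} [Countable X] (C : Set (PMF X)) (Vs : Adversary X)
    (hVs : IsSubtractive Vs) (ζ : ℝ) (hζ : ζ ∈ Set.Ioo (0 : ℝ) 1) (m : ℕ)
    (p : PMF X) (hp : p ∈ C) (Q : PMF (PMF X)) (hQ : Q.support ⊆ C)
    (hclose : tv (advPush Vs (metaSample Q m)) (advPush Vs (iid p m)) < ζ) :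
    ∀ k : ℕ, ∃ Vadd : Adversary X, IsAdditive Vadd ∧
      tv (advPush Vadd (metaSample Q m)) (advPush Vadd (iid p m)) < ζ + 1 / (k + 1) ∧
      ∀ η : ℝ, 0 < η → η < 2 / k → FixedBudgetSub Vs η →
        ∃ η' : ℝ, 0 ≤ η' ∧ η' ≤ k * η ∧ FixedBudgetAdd Vadd η' := by
  classical
  obtain ⟨hζ0, hζ1⟩ := hζ
  have hVs' : ∀ S T, T ∈ (Vs S).support → T ≤ S := hVs
  intro k
  set P₁ := metaSample Q m with hP₁
  set P₂ := iid p m with hP₂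
  have hcard₁ : ∀ S ∈ P₁.support, Multiset.card S = m := by
    intro S hS
    rw [hP₁, metaSample] at hS
    simp only [PMF.support_bind, Set.mem_iUnion] at hS
    obtain ⟨q, _, hS⟩ := hS
    exact Stmt10Aux.iid_support_card q m S hS
  have hcard₂ : ∀ S ∈ P₂.support, Multiset.card S = m := fun S hS =>
    Stmt10Aux.iid_support_card p m S hS
  obtain ⟨x₀, _⟩ := p.support_nonempty
  obtain ⟨t₀, ht₀⟩ := ((Stmt10Aux.JJ Vs P₁).map Prod.fst).support_nonempty
  rw [PMF.mem_support_iff] at ht₀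
  set dflt := Stmt10Aux.condP (Stmt10Aux.JJ Vs P₁) t₀ ht₀ with hdflt
  set XI₁ : Multiset X → PMF (Multiset X) := Stmt10Aux.XI Vs P₁ dflt with hXI₁
  set XI₂ : Multiset X → PMF (Multiset X) := Stmt10Aux.XI Vs P₂ dflt with hXI₂
  set bt : ℕ → Multiset X → PMF (Multiset X) :=
    fun j t => Stmt10Aux.batch XI₁ XI₂ (k - j) j t with hbtdef
  obtain ⟨r₀, hr₀⟩ := dflt.support_nonempty
  set Dstar := Multiset.card r₀ with hDstar
  set aF : ℕ → ℕ :=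
    (fun n => if m = 0 then 0 else ⌊((k * Dstar : ℝ) / m) * n⌋₊) with haF
  refine ⟨Stmt10Aux.vadd Vs bt k m aF x₀, ?_, ?_, ?_⟩
  · exact fun S T hT => Stmt10Aux.vadd_le Vs bt k m aF x₀ S T hT
  · -- total variation bound
    set u := PMF.uniformOfFintype (Fin (k+1)) with hudef
    set marg₁ := (Stmt10Aux.JJ Vs P₁).map Prod.fst with hm₁
    set marg₂ := (Stmt10Aux.JJ Vs P₂).map Prod.fst with hm₂
    set f : Fin (k+1) → PMF (Multiset X) :=
      (fun j => marg₁.bind fun t => Stmt10Aux.Kc XI₁ XI₂ ((k - j.val) + 1) j.val t) with hf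
    set g : Fin (k+1) → PMF (Multiset X) :=
      (fun j => marg₂.bind fun t => Stmt10Aux.Kc XI₁ XI₂ (k - j.val) (j.val + 1) t) with hg
    have hU₁ : P₁.bind (Stmt10Aux.vadd Vs bt k m aF x₀) = u.bind f := by
      rw [Stmt10Aux.push_eq Vs hVs' P₁ k m hcard₁ bt dflt aF x₀]
      refine congrArg _ (funext fun j => congrArg _ (funext fun t => ?_))
      exact Stmt10Aux.innerEq1 XI₁ XI₂ (k - j.val) j.val t
    have hU₂ : P₂.bind (Stmt10Aux.vadd Vs bt k m aF x₀) = u.bind g := by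
      rw [Stmt10Aux.push_eq Vs hVs' P₂ k m hcard₂ bt dflt aF x₀]
      refine congrArg _ (funext fun j => congrArg _ (funext fun t => ?_))
      exact Stmt10Aux.innerEq2 XI₁ XI₂ (k - j.val) j.val t
    set e := finRotate (k+1) with he
    set Dm := Stmt10Aux.Dv marg₁ marg₂ with hDm
    have hterm : ∀ j : Fin (k+1),
        Stmt10Aux.Dv (f (e j)) (g j) ≤ if (j : ℕ) < k then Dm else 2 := by
      intro j
      by_cases hj : (j : ℕ) < k
      · rw [if_pos hj]
        have hval : ((e j : Fin (k+1)) : ℕ) = (j : ℕ) + 1 := by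
          rw [he, finRotate_succ_apply, Fin.val_add_one, if_neg]
          intro hlast
          rw [hlast] at hj
          simp [Fin.last] at hj
        have hfe : f (e j) = marg₁.bind fun t =>
            Stmt10Aux.Kc XI₁ XI₂ (k - (j : ℕ)) ((j : ℕ) + 1) t := by
          rw [hf]
          simp only
          rw [hval, show k - ((j:ℕ) + 1) + 1 = k - (j:ℕ) by omega]
        rw [hfe, hg]
        exact Stmt10Aux.Dv_bind_le marg₁ marg₂ _
      · rw [if_neg hj]
        exact Stmt10Aux.Dv_le_two _ _
    have hsum : ∑ j : Fin (k+1), Stmt10Aux.Dv (f (e j)) (g j) ≤ (k : ℝ≥0∞) * Dm + 2 := by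
      calc ∑ j : Fin (k+1), Stmt10Aux.Dv (f (e j)) (g j)
          ≤ ∑ j : Fin (k+1), (if (j : ℕ) < k then Dm else 2) :=
            Finset.sum_le_sum fun j _ => hterm j
        _ = (k : ℝ≥0∞) * Dm + 2 := by
            rw [Fin.sum_univ_castSucc]
            have h1 : ∀ i : Fin k,
                (if ((Fin.castSucc i : Fin (k+1)) : ℕ) < k then Dm else 2) = Dm :=
              fun i => if_pos (by simpa using i.isLt)
            have h2 : (if ((Fin.last k : Fin (k+1)) : ℕ) < k then Dm else 2) = 2 :=
              if_neg (by simp)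
            rw [Finset.sum_congr rfl fun i _ => h1 i, h2, Finset.sum_const, Finset.card_univ,
              Fintype.card_fin, nsmul_eq_mul]
    have hDvU : Stmt10Aux.Dv (u.bind f) (u.bind g)
        ≤ ((k+1 : ℕ) : ℝ≥0∞)⁻¹ * ((k : ℝ≥0∞) * Dm + 2) := by
      have hh := Stmt10Aux.Dv_uniform_bind_le (fun j => f (e j)) g
      rw [Stmt10Aux.uniform_bind_reindex f e] at hh
      exact hh.trans (mul_le_mul_right hsum _)
    have hDmtop : Dm ≠ ⊤ := Stmt10Aux.Dv_ne_top _ _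
    have hkDm : (k : ℝ≥0∞) * Dm ≠ ⊤ := ENNReal.mul_ne_top (ENNReal.natCast_ne_top k) hDmtop
    have hRHStop : ((k+1 : ℕ) : ℝ≥0∞)⁻¹ * ((k : ℝ≥0∞) * Dm + 2) ≠ ⊤ :=
      ENNReal.mul_ne_top (ENNReal.inv_ne_top.2 (by exact_mod_cast Nat.succ_ne_zero k))
        (ENNReal.add_ne_top.2 ⟨hkDm, by norm_num⟩)
    set dm := Dm.toReal with hdm
    have hdm0 : 0 ≤ dm := ENNReal.toReal_nonneg
    have hdm2ζ : dm < 2 * ζ := by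
      have h1 : tv (P₁.bind Vs) (P₂.bind Vs) < ζ := hclose
      rw [Stmt10Aux.tv_eq_Dv] at h1
      have h2 : marg₁ = P₁.bind Vs := Stmt10Aux.JJ_marg_eq Vs P₁
      have h3 : marg₂ = P₂.bind Vs := Stmt10Aux.JJ_marg_eq Vs P₂
      rw [hdm, hDm, h2, h3]
      linarith
    have htoReal : (((k+1 : ℕ) : ℝ≥0∞)⁻¹ * ((k : ℝ≥0∞) * Dm + 2)).toReal
        = ((k : ℝ) + 1)⁻¹ * ((k : ℝ) * dm + 2) := by
      rw [ENNReal.toReal_mul, ENNReal.toReal_inv, ENNReal.toReal_add hkDm (by norm_num),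
        ENNReal.toReal_mul, ENNReal.toReal_natCast, ENNReal.toReal_natCast,
        ENNReal.toReal_ofNat]
      push_cast
      ring
    have hfinal : tv (P₁.bind (Stmt10Aux.vadd Vs bt k m aF x₀))
        (P₂.bind (Stmt10Aux.vadd Vs bt k m aF x₀))
        ≤ ((k : ℝ) + 1)⁻¹ * ((k : ℝ) * dm + 2) / 2 := by
      rw [hU₁, hU₂, Stmt10Aux.tv_eq_Dv, ← htoReal]
      have hh := (ENNReal.toReal_le_toReal (Stmt10Aux.Dv_ne_top _ _) hRHStop).2 hDvU
      linarith
    have hk1 : (0 : ℝ) < (k : ℝ) + 1 := by positivity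
    set cR : ℝ := ((k : ℝ) + 1)⁻¹ with hcdef
    have hcpos : 0 < cR := by positivity
    have hck : cR * ((k : ℝ) + 1) = 1 := inv_mul_cancel₀ (ne_of_gt hk1)
    have key : (k : ℝ) * dm < 2 * ((k : ℝ) + 1) * ζ := by
      have h5 : (k : ℝ) * dm ≤ (k : ℝ) * (2 * ζ) :=
        mul_le_mul_of_nonneg_left (le_of_lt hdm2ζ) (Nat.cast_nonneg k)
      nlinarith
    have h6 : cR * ((k : ℝ) * dm) < cR * (2 * ((k : ℝ) + 1) * ζ) :=
      mul_lt_mul_of_pos_left key hcpos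
    have h7 : cR * (2 * ((k : ℝ) + 1) * ζ) = 2 * ζ := by
      linear_combination 2 * ζ * hck
    have h8 : cR * ((k : ℝ) * dm + 2) / 2 = cR * ((k : ℝ) * dm) / 2 + cR := by ring
    have hgoal : cR * ((k : ℝ) * dm + 2) / 2 < ζ + 1 / ((k : ℝ) + 1) := by
      rw [h8, one_div, ← hcdef]
      linarith
    exact lt_of_le_of_lt hfinal hgoal
  · -- budget clause
    rintro η hη0 hη2k ⟨c, hc, hb⟩
    have hbm := hb m
    have hcm : c m ≤ m := by
      have h1 := hbm.1
      have hpos : (0:ℝ) ≤ η * m := mul_nonneg (le_of_lt hη0) (Nat.cast_nonneg m)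
      have h2 : (c m : ℝ) < (m : ℝ) + 1 := by linarith
      exact_mod_cast Nat.lt_succ_iff.mp (by exact_mod_cast h2)
    set D := m - c m with hD
    have hDcast : (D : ℝ) = (m : ℝ) - c m := by
      rw [hD]; push_cast [hcm]; ring
    have hDle : (D : ℝ) ≤ η * m := by rw [hDcast]; exact hbm.2
    have hXI1card : ∀ t, ∀ r ∈ (XI₁ t).support, Multiset.card r = D :=
      Stmt10Aux.XI_card Vs hVs' P₁ P₁ m hcard₁ hcard₁ t₀ ht₀ c hc
    have hXI2card : ∀ t, ∀ r ∈ (XI₂ t).support, Multiset.card r = D :=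
      Stmt10Aux.XI_card Vs hVs' P₂ P₁ m hcard₂ hcard₁ t₀ ht₀ c hc
    have hDstarD : Dstar = D := by
      rw [hDstar]
      exact Stmt10Aux.cond_card Vs hVs' P₁ m hcard₁ c hc t₀ ht₀ r₀ hr₀
    have hbtcard : ∀ j, j ≤ k → ∀ t, ∀ w ∈ (bt j t).support, Multiset.card w = k * D := by
      intro j hj t w hw
      have hh := Stmt10Aux.batch_card XI₁ XI₂ D hXI1card hXI2card (k - j) j t w hw
      rwa [Nat.sub_add_cancel hj] at hh
    have ham : aF m = k * D := by
      rw [haF]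
      by_cases hm : m = 0
      · simp only [hm, if_pos]
        have hD0 : D = 0 := by rw [hD, hm]; simp
        simp [hD0]
      · simp only [if_neg hm]
        rw [hDstarD]
        have hmne : (m : ℝ) ≠ 0 := Nat.cast_ne_zero.2 hm
        rw [div_mul_cancel₀ _ hmne,
          show ((k : ℝ) * (D : ℝ)) = ((k * D : ℕ) : ℝ) by push_cast; ring]
        exact Nat.floor_natCast _
    set η' : ℝ := if m = 0 then 0 else (k * Dstar : ℝ) / m with hη'
    have haFeq : ∀ n, (aF n : ℝ) = if m = 0 then 0 else (⌊η' * n⌋₊ : ℝ) := by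
      intro n
      rw [haF, hη']
      by_cases hm : m = 0
      · simp [hm]
      · simp only [if_neg hm]
    refine ⟨η', ?_, ?_, ?_⟩
    · rw [hη']
      split_ifs with hm
      · exact le_refl 0
      · positivity
    · rw [hη']
      split_ifs with hm
      · positivity
      · rw [hDstarD]
        have hm0 : (0:ℝ) < m := by
          have := Nat.pos_of_ne_zero hm
          exact_mod_cast this
        rw [div_le_iff₀ hm0]
        calc (k : ℝ) * D ≤ (k : ℝ) * (η * m) :=
              mul_le_mul_of_nonneg_left hDle (Nat.cast_nonneg k)
          _ = (k : ℝ) * η * m := by ring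
    · refine ⟨fun n => n + aF n, ?_, ?_⟩
      · intro S T hT
        exact Stmt10Aux.vadd_card Vs bt k m aF x₀ (k * D) hbtcard ham S T hT
      · intro n
        have hcast : ((n + aF n : ℕ) : ℝ) - n = (aF n : ℝ) := by push_cast; ring
        rw [hcast]
        by_cases hm : m = 0
        · rw [haFeq n, if_pos hm, hη', if_pos hm]
          norm_num
        · rw [haFeq n, if_neg hm]
          have hη'0 : 0 ≤ η' := by
            rw [hη', if_neg hm]; positivity
          have hnn : 0 ≤ η' * n := mul_nonneg hη'0 (Nat.cast_nonneg n)
          exact ⟨by simpa using Nat.sub_one_lt_floor (η' * n), Nat.floor_le hnn⟩
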